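/- Let τ ∈ T with Im τ > 0. If ξ_1, ξ_2 ∈ M_τ(QC) agree on the subalgebra Q̃C of even quasicontinuous functions, then ξ_1 = ξ_2. -/

import Mathlib

open MeasureTheory Real Filter Topology

noncomputable section

/-- The `n`-th Fourier coefficient of `f : ℝ → ℂ` (representing `x ↦ f(e^{ix})`). -/
def fourierCoef (f : ℝ → ℂ) (n : ℤ) : ℂ :=
  (1 / (2 * π)) * ∫ x in (0 : ℝ)..(2 * π), f x * Complex.exp (-(Complex.I * n * x))

/-- `L^∞(T)`, modeled as bounded measurable `2π`-periodic functions `ℝ → ℂ`. -/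
def LinfT : Set (ℝ → ℂ) :=
  {f | Function.Periodic f (2 * π) ∧ Measurable f ∧ ∃ C, ∀ x, ‖f x‖ ≤ C}

/-- `C(T)`: continuous `2π`-periodic functions. -/
def CtsT : Set (ℝ → ℂ) := {f | Function.Periodic f (2 * π) ∧ Continuous f}

/-- The Hardy space `H^∞`: bounded functions whose negative Fourier coefficients vanish. -/
def HinfT : Set (ℝ → ℂ) := {f ∈ LinfT | ∀ n : ℤ, n < 0 → fourierCoef f n = 0}

/-- The conjugate Hardy space: bounded functions whose positive Fourier coefficients vanish. -/
def HinfBarT : Set (ℝ → ℂ) := {f ∈ LinfT | ∀ n : ℤ, 0 < n → fourierCoef f n = 0}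

/-- The quasicontinuous functions `QC = (C + H^∞) ∩ (C + conj(H^∞))`. -/
def QCset : Set (ℝ → ℂ) :=
  {f | (∃ c ∈ CtsT, ∃ h ∈ HinfT, f = c + h) ∧ (∃ c ∈ CtsT, ∃ h ∈ HinfBarT, f = c + h)}

/-- The flip `q̃(t) = q(1/t)`, i.e. `q̃(e^{ix}) = q(e^{-ix})`. -/
def flipF (f : ℝ → ℂ) : ℝ → ℂ := fun x => f (-x)

/-- The even quasicontinuous functions `Q̃C = {q ∈ QC : q = q̃}`. -/
def tQCset : Set (ℝ → ℂ) := {f ∈ QCset | flipF f = f}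

/-- The even continuous functions `C̃(T)`. -/
def evContT : Set (ℝ → ℂ) := {f ∈ CtsT | flipF f = f}

/-- The piecewise continuous functions `PC`: `2π`-periodic functions having one-sided
limits at every point. -/
def PCset : Set (ℝ → ℂ) :=
  {p | Function.Periodic p (2 * π) ∧
    ∀ θ : ℝ, (∃ l : ℂ, Tendsto p (𝓝[>] θ) (𝓝 l)) ∧ (∃ l : ℂ, Tendsto p (𝓝[<] θ) (𝓝 l))}

/-- `ξ` is a character (multiplicative linear functional of norm `1`) of the subalgebra of
`L^∞(T)` whose underlying set is `S`; only the values of `ξ` on `S` are relevant. -/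
def IsChar (S : Set (ℝ → ℂ)) (ξ : (ℝ → ℂ) → ℂ) : Prop :=
  (∀ p ∈ S, ∀ q ∈ S, ξ (p + q) = ξ p + ξ q) ∧
  (∀ p ∈ S, ∀ q ∈ S, ξ (p * q) = ξ p * ξ q) ∧
  (∀ (c : ℂ), ∀ q ∈ S, ξ (c • q) = c * ξ q) ∧
  ξ 1 = 1 ∧
  (∀ q ∈ S, ∀ C : ℝ, (∀ x, ‖q x‖ ≤ C) → ‖ξ q‖ ≤ C)

/-- The moving average `δ_{λ,τ}(a) = (λ/2π) ∫_{θ-π/λ}^{θ+π/λ} a(e^{ix}) dx`, `τ = e^{iθ}`. -/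
def movAvg (a : ℝ → ℂ) (lam θ : ℝ) : ℂ :=
  (lam / (2 * π)) * ∫ x in (θ - π / lam)..(θ + π / lam), a x

/-- `ξ ∈ M_τ^0(S)` (`τ = e^{iθ}`): `ξ` is a character of (the algebra with underlying set) `S`
lying in the weak-* closure of the moving-average functionals `{δ_{λ,τ} : λ ∈ [1,∞)}`. -/
def InM0 (S : Set (ℝ → ℂ)) (θ : ℝ) (ξ : (ℝ → ℂ) → ℂ) : Prop :=
  IsChar S ξ ∧
  ∀ qs : List (ℝ → ℂ), (∀ q ∈ qs, q ∈ S) → ∀ ε : ℝ, 0 < ε →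
    ∃ lam : ℝ, 1 ≤ lam ∧ ∀ q ∈ qs, ‖ξ q - movAvg q lam θ‖ < ε

/-- `ξ ∈ M_τ(S)` (`τ = e^{iθ}`): the fiber condition `ξ(f) = f(τ)` for all continuous `f`
belonging to `S`. -/
def InFiber (S : Set (ℝ → ℂ)) (θ : ℝ) (ξ : (ℝ → ℂ) → ℂ) : Prop :=
  IsChar S ξ ∧ ∀ f ∈ CtsT ∩ S, ξ f = f θ

/-- `ξ ∈ M_τ^+(QC)`: `ξ(f) = 0` whenever `limsup_{t→τ+0}|f(t)| = 0`, `f ∈ QC`. -/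
def InMplus (θ : ℝ) (ξ : (ℝ → ℂ) → ℂ) : Prop :=
  IsChar QCset ξ ∧
  ∀ f ∈ QCset, Filter.limsup (fun x => ‖f x‖) (𝓝[>] θ) = 0 → ξ f = 0

/-- `ξ ∈ M_τ^-(QC)`: `ξ(f) = 0` whenever `limsup_{t→τ-0}|f(t)| = 0`, `f ∈ QC`. -/
def InMminus (θ : ℝ) (ξ : (ℝ → ℂ) → ℂ) : Prop :=
  IsChar QCset ξ ∧
  ∀ f ∈ QCset, Filter.limsup (fun x => ‖f x‖) (𝓝[<] θ) = 0 → ξ f = 0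

/-- The conjugate character `ξ'(q) = ξ(q̃)`. -/
def conjChar (ξ : (ℝ → ℂ) → ℂ) : (ℝ → ℂ) → ℂ := fun q => ξ (flipF q)

namespace QCP

/-- integer exponentials -/
def eF (k : ℤ) : ℝ → ℂ := fun x => Complex.exp (Complex.I * k * x)

lemma norm_eF (k : ℤ) (x : ℝ) : ‖eF k x‖ = 1 := by
  simp [eF, Complex.norm_exp]

lemma eF_periodic (k : ℤ) : Function.Periodic (eF k) (2 * π) := by
  intro x
  simp only [eF]
  push_cast
  rw [show Complex.I * (k : ℂ) * ((x : ℂ) + 2 * (π : ℂ)) =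
      Complex.I * (k : ℂ) * (x : ℂ) + (k : ℂ) * (2 * (π : ℂ) * Complex.I) by ring,
    Complex.exp_add, Complex.exp_int_mul_two_pi_mul_I, mul_one]

lemma eF_continuous (k : ℤ) : Continuous (eF k) := by
  unfold eF; fun_prop

lemma eF_mem_CtsT (k : ℤ) : eF k ∈ CtsT := ⟨eF_periodic k, eF_continuous k⟩

lemma bdd_intervalIntegrable {f : ℝ → ℂ} (hm : Measurable f) {C : ℝ}
    (hC : ∀ x, ‖f x‖ ≤ C) (a b : ℝ) : IntervalIntegrable f volume a b := by
  rw [intervalIntegrable_iff]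
  refine MeasureTheory.Integrable.mono' (g := fun _ => C)
    ((MeasureTheory.integrableOn_const_iff (C := C)).mpr (Or.inr ?_)) hm.aestronglyMeasurable ?_
  · exact measure_Ioc_lt_top
  · filter_upwards with x using hC x

lemma fourier_integrand_integrable {f : ℝ → ℂ} (hm : Measurable f) {C : ℝ}
    (hC : ∀ x, ‖f x‖ ≤ C) (n : ℤ) (a b : ℝ) :
    IntervalIntegrable (fun x : ℝ => f x * Complex.exp (-(Complex.I * n * x))) volume a b := by
  refine bdd_intervalIntegrable (C := C * 1) (hm.mul (by fun_prop)) (fun x => ?_) a b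
  rw [Pi.mul_apply, norm_mul]
  have h1 : ‖Complex.exp (-(Complex.I * (n : ℂ) * (x : ℂ)))‖ = 1 := by
    simp [Complex.norm_exp]
  rw [h1]
  exact mul_le_mul_of_nonneg_right (hC x) zero_le_one

lemma integrand_integrable {f : ℝ → ℂ} (hf : f ∈ LinfT) (n : ℤ) (a b : ℝ) :
    IntervalIntegrable (fun x : ℝ => f x * Complex.exp (-(Complex.I * n * x))) volume a b := by
  obtain ⟨-, hm, C, hC⟩ := hf
  exact fourier_integrand_integrable hm hC n a b

lemma fourierCoef_add {f g : ℝ → ℂ} (hf : f ∈ LinfT) (hg : g ∈ LinfT) (n : ℤ) :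
    fourierCoef (f + g) n = fourierCoef f n + fourierCoef g n := by
  unfold fourierCoef
  rw [← mul_add, ← intervalIntegral.integral_add (integrand_integrable hf n 0 (2 * π)) (integrand_integrable hg n 0 (2 * π))]
  congr 1
  apply intervalIntegral.integral_congr
  intro x _
  simp [add_mul]

lemma fourierCoef_sub {f g : ℝ → ℂ} (hf : f ∈ LinfT) (hg : g ∈ LinfT) (n : ℤ) :
    fourierCoef (f - g) n = fourierCoef f n - fourierCoef g n := by
  unfold fourierCoef
  rw [← mul_sub, ← intervalIntegral.integral_sub (integrand_integrable hf n 0 (2 * π)) (integrand_integrable hg n 0 (2 * π))]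
  congr 1
  apply intervalIntegral.integral_congr
  intro x _
  simp [sub_mul]

lemma fourierCoef_smul (a : ℂ) (f : ℝ → ℂ) (n : ℤ) :
    fourierCoef (a • f) n = a * fourierCoef f n := by
  unfold fourierCoef
  rw [show (fun x : ℝ => (a • f) x * Complex.exp (-(Complex.I * n * x)))
      = fun x : ℝ => a * (f x * Complex.exp (-(Complex.I * n * x))) by
    funext x; simp [mul_assoc]]
  rw [intervalIntegral.integral_const_mul]
  ring

lemma fourierCoef_zero (n : ℤ) : fourierCoef (0 : ℝ → ℂ) n = 0 := by
  unfold fourierCoef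
  simp

lemma fourierCoef_mul_eF (f : ℝ → ℂ) (k n : ℤ) :
    fourierCoef (f * eF k) n = fourierCoef f (n - k) := by
  unfold fourierCoef
  congr 1
  apply intervalIntegral.integral_congr
  intro x _
  simp only [Pi.mul_apply, eF]
  rw [mul_assoc, ← Complex.exp_add]
  congr 2
  push_cast
  ring

lemma fourierCoef_eF (m n : ℤ) : fourierCoef (eF m) n = if n = m then 1 else 0 := by
  unfold fourierCoef eF
  rcases eq_or_ne n m with rfl | h
  · rw [if_pos rfl]
    rw [intervalIntegral.integral_congr (g := fun _ => (1 : ℂ))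
      (fun x _ => by rw [← Complex.exp_add]; simp)]
    have hpi : (π : ℂ) ≠ 0 := by exact_mod_cast Real.pi_ne_zero
    simp
    field_simp
  · rw [if_neg h]
    rw [intervalIntegral.integral_congr
      (g := fun x : ℝ => Complex.exp ((Complex.I * ((m : ℂ) - (n : ℂ))) * (x : ℝ)))
      (fun x _ => by rw [← Complex.exp_add]; congr 1; push_cast; ring)]
    have hc : Complex.I * ((m : ℂ) - (n : ℂ)) ≠ 0 := by
      refine mul_ne_zero Complex.I_ne_zero (sub_ne_zero.mpr ?_)
      exact_mod_cast h.symm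
    rw [integral_exp_mul_complex hc]
    have h2 : Complex.I * ((m : ℂ) - (n : ℂ)) * ((2 : ℝ) * π : ℝ) =
        ((m - n : ℤ) : ℂ) * (2 * (π : ℂ) * Complex.I) := by push_cast; ring
    rw [h2, Complex.exp_int_mul_two_pi_mul_I]
    simp

end QCP

namespace QCP

/-! ### Basic closure properties -/

lemma LinfT_add {f g : ℝ → ℂ} (hf : f ∈ LinfT) (hg : g ∈ LinfT) : f + g ∈ LinfT := by
  obtain ⟨hfp, hfm, C, hC⟩ := hf
  obtain ⟨hgp, hgm, D, hD⟩ := hg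
  exact ⟨hfp.add hgp, hfm.add hgm, C + D, fun x =>
    (norm_add_le _ _).trans (add_le_add (hC x) (hD x))⟩

lemma LinfT_smul (a : ℂ) {f : ℝ → ℂ} (hf : f ∈ LinfT) : a • f ∈ LinfT := by
  obtain ⟨hfp, hfm, C, hC⟩ := hf
  refine ⟨fun x => by simp [hfp x], hfm.const_smul a, ‖a‖ * C, fun x => ?_⟩
  simp only [Pi.smul_apply, norm_smul]
  exact mul_le_mul_of_nonneg_left (hC x) (norm_nonneg a)

lemma LinfT_sub {f g : ℝ → ℂ} (hf : f ∈ LinfT) (hg : g ∈ LinfT) : f - g ∈ LinfT := by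
  have := LinfT_add hf (LinfT_smul (-1) hg)
  simpa [sub_eq_add_neg, neg_one_smul] using this

lemma LinfT_mul {f g : ℝ → ℂ} (hf : f ∈ LinfT) (hg : g ∈ LinfT) : f * g ∈ LinfT := by
  obtain ⟨hfp, hfm, C, hC⟩ := hf
  obtain ⟨hgp, hgm, D, hD⟩ := hg
  refine ⟨hfp.mul hgp, hfm.mul hgm, max C 0 * max D 0, fun x => ?_⟩
  rw [Pi.mul_apply, norm_mul]
  exact mul_le_mul ((hC x).trans (le_max_left _ _)) ((hD x).trans (le_max_left _ _))
    (norm_nonneg _) (le_max_right _ _)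

lemma CtsT_bounded {f : ℝ → ℂ} (hf : f ∈ CtsT) : ∃ C, ∀ x, ‖f x‖ ≤ C := by
  obtain ⟨hp, hc⟩ := hf
  obtain ⟨C, hC⟩ := (isCompact_Icc (a := (0:ℝ)) (b := 2 * π)).exists_bound_of_continuousOn
    hc.continuousOn
  refine ⟨C, fun x => ?_⟩
  obtain ⟨y, hy, hxy⟩ := hp.exists_mem_Ico₀ (by positivity) x
  rw [hxy]
  exact hC y ⟨hy.1, hy.2.le⟩

lemma CtsT_subset_LinfT : CtsT ⊆ LinfT := fun f hf =>
  ⟨hf.1, hf.2.measurable, CtsT_bounded hf⟩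

lemma CtsT_add {f g : ℝ → ℂ} (hf : f ∈ CtsT) (hg : g ∈ CtsT) : f + g ∈ CtsT :=
  ⟨hf.1.add hg.1, hf.2.add hg.2⟩

lemma CtsT_smul (a : ℂ) {f : ℝ → ℂ} (hf : f ∈ CtsT) : a • f ∈ CtsT :=
  ⟨fun x => by simp [hf.1 x], hf.2.const_smul a⟩

lemma CtsT_mul {f g : ℝ → ℂ} (hf : f ∈ CtsT) (hg : g ∈ CtsT) : f * g ∈ CtsT :=
  ⟨hf.1.mul hg.1, hf.2.mul hg.2⟩

lemma CtsT_zero : (0 : ℝ → ℂ) ∈ CtsT := ⟨fun _ => rfl, continuous_const⟩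

lemma HinfT_zero : (0 : ℝ → ℂ) ∈ HinfT :=
  ⟨⟨fun _ => rfl, measurable_const, 0, fun x => by simp⟩, fun n _ => fourierCoef_zero n⟩

lemma HinfBarT_zero : (0 : ℝ → ℂ) ∈ HinfBarT :=
  ⟨⟨fun _ => rfl, measurable_const, 0, fun x => by simp⟩, fun n _ => fourierCoef_zero n⟩

lemma CtsT_subset_QCset : CtsT ⊆ QCset := fun f hf =>
  ⟨⟨f, hf, 0, HinfT_zero, (add_zero f).symm⟩, ⟨f, hf, 0, HinfBarT_zero, (add_zero f).symm⟩⟩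

lemma QCset_subset_LinfT : QCset ⊆ LinfT := by
  rintro f ⟨⟨c, hc, h, hh, rfl⟩, -⟩
  exact LinfT_add (CtsT_subset_LinfT hc) hh.1

lemma QCset_add {f g : ℝ → ℂ} (hf : f ∈ QCset) (hg : g ∈ QCset) : f + g ∈ QCset := by
  obtain ⟨⟨c1, hc1, h1, hh1, rfl⟩, ⟨c2, hc2, h2, hh2, he⟩⟩ := hf
  obtain ⟨⟨c3, hc3, h3, hh3, rfl⟩, ⟨c4, hc4, h4, hh4, he'⟩⟩ := hg
  constructor
  · exact ⟨c1 + c3, CtsT_add hc1 hc3, h1 + h3,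
      ⟨LinfT_add hh1.1 hh3.1, fun n hn => by
        rw [fourierCoef_add hh1.1 hh3.1, hh1.2 n hn, hh3.2 n hn, add_zero]⟩,
      by ring⟩
  · exact ⟨c2 + c4, CtsT_add hc2 hc4, h2 + h4,
      ⟨LinfT_add hh2.1 hh4.1, fun n hn => by
        rw [fourierCoef_add hh2.1 hh4.1, hh2.2 n hn, hh4.2 n hn, add_zero]⟩,
      by rw [he, he']; ring⟩

lemma QCset_smul (a : ℂ) {f : ℝ → ℂ} (hf : f ∈ QCset) : a • f ∈ QCset := by
  obtain ⟨⟨c1, hc1, h1, hh1, he1⟩, ⟨c2, hc2, h2, hh2, he2⟩⟩ := hf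
  constructor
  · exact ⟨a • c1, CtsT_smul a hc1, a • h1,
      ⟨LinfT_smul a hh1.1, fun n hn => by rw [fourierCoef_smul, hh1.2 n hn, mul_zero]⟩,
      by rw [he1, smul_add]⟩
  · exact ⟨a • c2, CtsT_smul a hc2, a • h2,
      ⟨LinfT_smul a hh2.1, fun n hn => by rw [fourierCoef_smul, hh2.2 n hn, mul_zero]⟩,
      by rw [he2, smul_add]⟩

/-! ### The flip -/

lemma flipF_add (f g : ℝ → ℂ) : flipF (f + g) = flipF f + flipF g := rfl

lemma flipF_mul (f g : ℝ → ℂ) : flipF (f * g) = flipF f * flipF g := rfl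

lemma flipF_flipF (f : ℝ → ℂ) : flipF (flipF f) = f := by
  funext x; simp [flipF]

lemma flipF_periodic {f : ℝ → ℂ} (hf : Function.Periodic f (2 * π)) :
    Function.Periodic (flipF f) (2 * π) := by
  intro x
  have h := hf (-(x + 2 * π))
  rw [show -(x + 2 * π) + 2 * π = -x by ring] at h
  simp only [flipF]
  exact h.symm

lemma flipF_eF (k : ℤ) : flipF (eF k) = eF (-k) := by
  funext x
  simp only [flipF, eF]
  congr 1
  push_cast
  ring

lemma flipF_LinfT {f : ℝ → ℂ} (hf : f ∈ LinfT) : flipF f ∈ LinfT := by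
  obtain ⟨hp, hm, C, hC⟩ := hf
  exact ⟨flipF_periodic hp, hm.comp measurable_neg, C, fun x => hC (-x)⟩

lemma flipF_CtsT {f : ℝ → ℂ} (hf : f ∈ CtsT) : flipF f ∈ CtsT :=
  ⟨flipF_periodic hf.1, hf.2.comp continuous_neg⟩

lemma fourierCoef_flipF {f : ℝ → ℂ} (hf : f ∈ LinfT) (n : ℤ) :
    fourierCoef (flipF f) n = fourierCoef f (-n) := by
  unfold fourierCoef
  congr 1
  have h1 : (fun x : ℝ => flipF f x * Complex.exp (-(Complex.I * n * x)))
      = fun x : ℝ => (f * eF n) (-x) := by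
    funext x
    simp only [flipF, Pi.mul_apply, eF]
    congr 2
    push_cast
    ring
  rw [h1, intervalIntegral.integral_comp_neg (fun x => (f * eF n) x), neg_zero]
  have hper : Function.Periodic (f * eF n) (2 * π) := hf.1.mul (eF_periodic n)
  have h2 := hper.intervalIntegral_add_eq (-(2 * π)) 0
  rw [show -(2 * π) + 2 * π = (0 : ℝ) by ring, zero_add] at h2
  rw [h2]
  apply intervalIntegral.integral_congr
  intro x _
  simp only [Pi.mul_apply, eF]
  congr 2
  push_cast
  ring

lemma flipF_HinfT {f : ℝ → ℂ} (hf : f ∈ HinfT) : flipF f ∈ HinfBarT :=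
  ⟨flipF_LinfT hf.1, fun n hn => by
    rw [fourierCoef_flipF hf.1, hf.2 (-n) (by omega)]⟩

lemma flipF_HinfBarT {f : ℝ → ℂ} (hf : f ∈ HinfBarT) : flipF f ∈ HinfT :=
  ⟨flipF_LinfT hf.1, fun n hn => by
    rw [fourierCoef_flipF hf.1, hf.2 (-n) (by omega)]⟩

lemma flipF_QCset {f : ℝ → ℂ} (hf : f ∈ QCset) : flipF f ∈ QCset := by
  obtain ⟨⟨c1, hc1, h1, hh1, he1⟩, ⟨c2, hc2, h2, hh2, he2⟩⟩ := hf
  constructor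
  · exact ⟨flipF c2, flipF_CtsT hc2, flipF h2, flipF_HinfBarT hh2,
      by rw [he2, flipF_add]⟩
  · exact ⟨flipF c1, flipF_CtsT hc1, flipF h1, flipF_HinfT hh1,
      by rw [he1, flipF_add]⟩

end QCP

namespace QCP

/-! ### Finite sums of exponentials -/

lemma sum_mem_CtsT (S : Finset ℤ) (a : ℤ → ℂ) :
    (∑ j ∈ S, a j • eF j) ∈ CtsT := by
  classical
  induction S using Finset.induction with
  | empty => simpa using CtsT_zero
  | insert j S' hj ih =>
    rw [Finset.sum_insert hj]
    exact CtsT_add (CtsT_smul _ (eF_mem_CtsT _)) ih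

lemma fourierCoef_finsetSum (S : Finset ℤ) (a : ℤ → ℂ) (n : ℤ) :
    fourierCoef (∑ j ∈ S, a j • eF j) n = ∑ j ∈ S, a j * fourierCoef (eF j) n := by
  classical
  induction S using Finset.induction with
  | empty => simpa using fourierCoef_zero n
  | @insert j S' hj ih =>
    rw [Finset.sum_insert hj, Finset.sum_insert hj,
      fourierCoef_add (CtsT_subset_LinfT (CtsT_smul _ (eF_mem_CtsT _)))
        (CtsT_subset_LinfT (sum_mem_CtsT S' a)),
      fourierCoef_smul, ih]

/-! ### `C + H^∞` is closed under multiplication by exponentials -/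

lemma eF_mem_LinfT (k : ℤ) : eF k ∈ LinfT := CtsT_subset_LinfT (eF_mem_CtsT k)

lemma HinfT_mul_eF_of_nonneg {h : ℝ → ℂ} (hh : h ∈ HinfT) {k : ℤ} (hk : 0 ≤ k) :
    h * eF k ∈ HinfT := by
  refine ⟨LinfT_mul hh.1 (eF_mem_LinfT k), fun n hn => ?_⟩
  rw [fourierCoef_mul_eF, hh.2 _ (by omega)]

/-- `C + H^∞` as a property. -/
def CplusH (f : ℝ → ℂ) : Prop := ∃ c ∈ CtsT, ∃ h ∈ HinfT, f = c + h

def CplusHbar (f : ℝ → ℂ) : Prop := ∃ c ∈ CtsT, ∃ h ∈ HinfBarT, f = c + h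

lemma mem_QCset_iff {f : ℝ → ℂ} : f ∈ QCset ↔ CplusH f ∧ CplusHbar f := Iff.rfl

lemma CplusH.mul_eF {f : ℝ → ℂ} (hf : CplusH f) (k : ℤ) : CplusH (f * eF k) := by
  classical
  obtain ⟨c, hc, h, hh, rfl⟩ := hf
  rcases le_or_gt 0 k with hk | hk
  · exact ⟨c * eF k, CtsT_mul hc (eF_mem_CtsT k), h * eF k,
      HinfT_mul_eF_of_nonneg hh hk, by ring⟩
  · set P : ℝ → ℂ := ∑ j ∈ Finset.Ico k 0, fourierCoef h (j - k) • eF j with hP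
    have hPc : P ∈ CtsT := sum_mem_CtsT _ _
    have hHL : h * eF k ∈ LinfT := LinfT_mul hh.1 (eF_mem_LinfT k)
    refine ⟨c * eF k + P, CtsT_add (CtsT_mul hc (eF_mem_CtsT k)) hPc,
      h * eF k - P, ⟨LinfT_sub hHL (CtsT_subset_LinfT hPc), fun n hn => ?_⟩, by ring⟩
    rw [fourierCoef_sub hHL (CtsT_subset_LinfT hPc), fourierCoef_mul_eF]
    rw [hP, fourierCoef_finsetSum]
    have hsum : ∑ j ∈ Finset.Ico k 0, fourierCoef h (j - k) * fourierCoef (eF j) n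
        = if n ∈ Finset.Ico k 0 then fourierCoef h (n - k) else 0 := by
      rw [← Finset.sum_ite_eq (Finset.Ico k 0) n (fun j => fourierCoef h (j - k))]
      apply Finset.sum_congr rfl
      intro j _
      rw [fourierCoef_eF]
      split <;> simp
    rw [hsum]
    by_cases hnk : k ≤ n
    · rw [if_pos (Finset.mem_Ico.mpr ⟨hnk, hn⟩), sub_self]
    · rw [if_neg (fun hmem => hnk (Finset.mem_Ico.mp hmem).1), hh.2 (n - k) (by omega), sub_zero]

lemma flipF_CplusH {f : ℝ → ℂ} (hf : CplusH f) : CplusHbar (flipF f) := by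
  obtain ⟨c, hc, h, hh, rfl⟩ := hf
  exact ⟨flipF c, flipF_CtsT hc, flipF h, flipF_HinfT hh, by rw [flipF_add]⟩

lemma flipF_CplusHbar {f : ℝ → ℂ} (hf : CplusHbar f) : CplusH (flipF f) := by
  obtain ⟨c, hc, h, hh, rfl⟩ := hf
  exact ⟨flipF c, flipF_CtsT hc, flipF h, flipF_HinfBarT hh, by rw [flipF_add]⟩

lemma CplusHbar.mul_eF {f : ℝ → ℂ} (hf : CplusHbar f) (k : ℤ) : CplusHbar (f * eF k) := by
  have h1 : CplusH (flipF f * eF (-k)) := (flipF_CplusHbar hf).mul_eF (-k)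
  have h2 : CplusHbar (flipF (flipF f * eF (-k))) := flipF_CplusH h1
  rwa [flipF_mul, flipF_flipF, flipF_eF, neg_neg] at h2

lemma QCset_mul_eF {f : ℝ → ℂ} (hf : f ∈ QCset) (k : ℤ) : f * eF k ∈ QCset :=
  ⟨CplusH.mul_eF hf.1 k, CplusHbar.mul_eF hf.2 k⟩

/-! ### Trigonometric polynomials -/

def TP : Subalgebra ℂ (ℝ → ℂ) := Algebra.adjoin ℂ (Set.range eF)

lemma QCset_mul_TP {c : ℝ → ℂ} (hc : c ∈ TP) : ∀ f ∈ QCset, f * c ∈ QCset := by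
  induction hc using Algebra.adjoin_induction with
  | mem x hx =>
    obtain ⟨k, rfl⟩ := hx
    exact fun f hf => QCset_mul_eF hf k
  | algebraMap r =>
    intro f hf
    have : f * algebraMap ℂ (ℝ → ℂ) r = r • f := by
      funext x
      simp [Algebra.algebraMap_eq_smul_one, mul_comm]
    rw [this]
    exact QCset_smul r hf
  | add x y hx hy ihx ihy =>
    intro f hf
    rw [mul_add]
    exact QCset_add (ihx f hf) (ihy f hf)
  | mul x y hx hy ihx ihy =>
    intro f hf
    rw [← mul_assoc]
    exact ihy (f * x) (ihx f hf)

lemma bump_mem_TP (θ₀ : ℝ) (m : ℕ) :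
    (fun x : ℝ => ((((1 + Real.cos (x - θ₀)) / 2) ^ m : ℝ) : ℂ)) ∈ TP := by
  have hb : (fun x : ℝ => (((1 + Real.cos (x - θ₀)) / 2 : ℝ) : ℂ)) ∈ TP := by
    have hrepr : (fun x : ℝ => (((1 + Real.cos (x - θ₀)) / 2 : ℝ) : ℂ))
        = (algebraMap ℂ (ℝ → ℂ)) (1 / 2)
          + (Complex.exp (-(Complex.I * θ₀)) / 4) • eF 1
          + (Complex.exp (Complex.I * θ₀) / 4) • eF (-1) := by
      funext x
      simp only [Pi.add_apply, Pi.smul_apply, smul_eq_mul, eF,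
        Algebra.algebraMap_eq_smul_one, Pi.smul_apply, Pi.one_apply, smul_eq_mul, mul_one]
      push_cast
      rw [Complex.cos]
      have e1 : Complex.exp (((x : ℂ) - (θ₀ : ℂ)) * Complex.I)
          = Complex.exp (-(Complex.I * θ₀)) * Complex.exp (Complex.I * ((1 : ℤ) : ℂ) * x) := by
        rw [← Complex.exp_add]; congr 1; push_cast; ring
      have e2 : Complex.exp (-((x : ℂ) - (θ₀ : ℂ)) * Complex.I)
          = Complex.exp (Complex.I * θ₀) * Complex.exp (Complex.I * ((-1 : ℤ) : ℂ) * x) := by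
        rw [← Complex.exp_add]; congr 1; push_cast; ring
      rw [e1, e2]
      ring
    rw [hrepr]
    refine add_mem (add_mem (Subalgebra.algebraMap_mem TP (1 / 2)) ?_) ?_
    · exact Subalgebra.smul_mem TP (Algebra.subset_adjoin ⟨1, rfl⟩) _
    · exact Subalgebra.smul_mem TP (Algebra.subset_adjoin ⟨-1, rfl⟩) _
  have := pow_mem hb m
  have heq : (fun x : ℝ => (((1 + Real.cos (x - θ₀)) / 2 : ℝ) : ℂ)) ^ m
      = fun x : ℝ => ((((1 + Real.cos (x - θ₀)) / 2) ^ m : ℝ) : ℂ) := by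
    funext x
    simp [Complex.ofReal_pow]
  rwa [heq] at this

end QCP

namespace QCP

lemma cos_le_of_mem {δ z : ℝ} (hδ0 : 0 ≤ δ) (hδπ : δ ≤ π) (h1 : δ ≤ z)
    (h2 : z ≤ 2 * π - δ) : Real.cos z ≤ Real.cos δ := by
  rcases le_or_gt z π with hz | hz
  · exact Real.cos_le_cos_of_nonneg_of_le_pi hδ0 hz h1
  · have he : Real.cos z = Real.cos (2 * π - z) := by
      rw [← Real.cos_neg (2 * π - z), show -(2 * π - z) = z - 2 * π by ring,
        Real.cos_sub_two_pi]
    rw [he]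
    exact Real.cos_le_cos_of_nonneg_of_le_pi hδ0 (by linarith) (by linarith)

end QCP

set_option maxHeartbeats 1000000 in
/-- Let `τ = e^{iθ}` with `Im τ > 0` (i.e. `0 < θ < π`). If `ξ₁, ξ₂ ∈ M_τ(QC)` agree on the
even quasicontinuous functions `Q̃C`, then `ξ₁ = ξ₂` (as characters of `QC`). -/
theorem fiber_chars_agree_upper (θ : ℝ) (hθ : 0 < θ ∧ θ < π)
    (ξ₁ ξ₂ : (ℝ → ℂ) → ℂ) (h₁ : InFiber QCset θ ξ₁) (h₂ : InFiber QCset θ ξ₂)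
    (hagree : ∀ q ∈ tQCset, ξ₁ q = ξ₂ q) :
    ∀ q ∈ QCset, ξ₁ q = ξ₂ q := by
  obtain ⟨hθ0, hθπ⟩ := hθ
  obtain ⟨⟨hadd₁, hmul₁, hsmul₁, hone₁, hbnd₁⟩, hfib₁⟩ := h₁
  obtain ⟨⟨hadd₂, hmul₂, hsmul₂, hone₂, hbnd₂⟩, hfib₂⟩ := h₂
  intro q hq
  obtain ⟨hqper, hqm, C0, hC0⟩ := QCP.QCset_subset_LinfT hq
  set M := max C0 0 with hM
  have hM0 : (0:ℝ) ≤ M := le_max_right _ _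
  have hMq : ∀ x, ‖q x‖ ≤ M := fun x => (hC0 x).trans (le_max_left _ _)
  have hπ := Real.pi_pos
  have key : ∀ ε : ℝ, 0 < ε → ‖ξ₁ q - ξ₂ q‖ ≤ (4 * M + 1) * ε := by
    intro ε hε
    -- geometric parameters
    set δ := min θ (π - θ) with hδdef
    have hδ0 : 0 < δ := lt_min hθ0 (by linarith)
    have hδθ : δ ≤ θ := min_le_left _ _
    have hδπθ : δ ≤ π - θ := min_le_right _ _
    have hδπ : δ ≤ π := by linarith
    set ρ := (1 + Real.cos δ) / 2 with hρdef
    have hρ0 : (0:ℝ) ≤ ρ := by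
      have := Real.neg_one_le_cos δ; rw [hρdef]; linarith
    have hρ1 : ρ < 1 := by
      have h := Real.cos_lt_cos_of_nonneg_of_le_pi (le_refl 0) hδπ hδ0
      rw [Real.cos_zero] at h
      rw [hρdef]; linarith
    obtain ⟨m₀, hm₀⟩ := exists_pow_lt_of_lt_one hε hρ1
    set m := m₀ + 1 with hmdef
    have hρm : ρ ^ m ≤ ε := by
      have h1 : ρ ^ m = ρ ^ m₀ * ρ := pow_succ ρ m₀
      have h2 : ρ ^ m₀ * ρ ≤ ρ ^ m₀ * 1 :=
        mul_le_mul_of_nonneg_left hρ1.le (pow_nonneg hρ0 m₀)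
      rw [h1]; rw [mul_one] at h2; exact h2.trans hm₀.le
    have hmpos : (0:ℝ) < (m : ℝ) := by positivity
    set κ := min δ (min 1 (2 * Real.sqrt (ε / m))) with hκdef
    have hκ0 : 0 < κ := lt_min hδ0 (lt_min one_pos (by positivity))
    have hκδ : κ ≤ δ := min_le_left _ _
    have hκ1 : κ ≤ 1 := le_trans (min_le_right _ _) (min_le_left _ _)
    have hκsq : κ ^ 2 ≤ 4 * (ε / m) := by
      have h1 : κ ≤ 2 * Real.sqrt (ε / m) := le_trans (min_le_right _ _) (min_le_right _ _)
      have h2 : κ ^ 2 ≤ (2 * Real.sqrt (ε / m)) ^ 2 := pow_le_pow_left₀ hκ0.le h1 2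
      rwa [mul_pow, Real.sq_sqrt (by positivity), show (2:ℝ)^2 = 4 by norm_num] at h2
    set ρ' := (1 + Real.cos κ) / 2 with hρ'def
    have hρ'0 : (0:ℝ) ≤ ρ' := by
      have := Real.neg_one_le_cos κ; rw [hρ'def]; linarith
    have hρ'1 : ρ' < 1 := by
      have h := Real.cos_lt_cos_of_nonneg_of_le_pi (le_refl 0)
        (by linarith [Real.pi_gt_three]) hκ0
      rw [Real.cos_zero] at h
      rw [hρ'def]; linarith
    obtain ⟨n, hn⟩ := exists_pow_lt_of_lt_one hε hρ'1
    -- the bump functions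
    set br : ℝ → ℝ := fun x => (1 + Real.cos (x - θ)) / 2 with hbr
    have hbr0 : ∀ x, 0 ≤ br x := fun x => by
      have := Real.neg_one_le_cos (x - θ); simp only [hbr]; linarith
    have hbr1 : ∀ x, br x ≤ 1 := fun x => by
      have := Real.cos_le_one (x - θ); simp only [hbr]; linarith
    set cF : ℝ → ℂ := fun x => ((br x ^ m : ℝ) : ℂ) with hcF
    set gF : ℝ → ℂ := fun x => ((br x ^ n : ℝ) : ℂ) with hgF
    have hcTP : cF ∈ QCP.TP := QCP.bump_mem_TP θ m
    have hgTP : gF ∈ QCP.TP := QCP.bump_mem_TP θ n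
    have hbrper : ∀ x, br (x + 2 * π) = br x := fun x => by
      simp only [hbr]
      rw [show x + 2 * π - θ = (x - θ) + 2 * π by ring, Real.cos_add_two_pi]
    have hcper : Function.Periodic cF (2 * π) := fun x => by
      simp only [hcF, hbrper x]
    have hgper : Function.Periodic gF (2 * π) := fun x => by
      simp only [hgF, hbrper x]
    have hgcts : gF ∈ CtsT := by
      refine ⟨hgper, ?_⟩
      simp only [hgF, hbr]
      fun_prop
    -- memberships
    have hqc : q * cF ∈ QCset := QCP.QCset_mul_TP hcTP q hq
    have hflipqc : flipF (q * cF) ∈ QCset := QCP.flipF_QCset hqc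
    set barQ := q * cF + flipF (q * cF) with hbarQ
    have hbarQmem : barQ ∈ QCset := QCP.QCset_add hqc hflipqc
    have hbarQeven : barQ ∈ tQCset := by
      refine ⟨hbarQmem, ?_⟩
      rw [hbarQ, QCP.flipF_add, QCP.flipF_flipF]
      exact add_comm _ _
    set fq := q + (-1 : ℂ) • barQ with hfq
    have hfqmem : fq ∈ QCset := QCP.QCset_add hq (QCP.QCset_smul _ hbarQmem)
    have hfgmem : fq * gF ∈ QCset := QCP.QCset_mul_TP hgTP fq hfqmem
    have hgQC : gF ∈ QCset := QCP.CtsT_subset_QCset hgcts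
    -- values of gF
    have hgθ : gF θ = 1 := by
      simp only [hgF, hbr, sub_self, Real.cos_zero]
      norm_num
    have hξ₁g : ξ₁ gF = 1 := by rw [hfib₁ gF ⟨hgcts, hgQC⟩, hgθ]
    have hξ₂g : ξ₂ gF = 1 := by rw [hfib₂ gF ⟨hgcts, hgQC⟩, hgθ]
    -- periodicity of fq * gF
    have hqcper : Function.Periodic (q * cF) (2 * π) := hqper.mul hcper
    have hflper : Function.Periodic (flipF (q * cF)) (2 * π) := QCP.flipF_periodic hqcper
    have hfgper : Function.Periodic (fq * gF) (2 * π) := by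
      intro x
      simp only [hfq, hbarQ, Pi.mul_apply, Pi.add_apply, Pi.smul_apply, smul_eq_mul]
      rw [hqper x, hcper x, hflper x, hgper x]
    -- norms of bump values
    have hnormc : ∀ z, ‖cF z‖ = br z ^ m := fun z => by
      simp only [hcF]
      rw [Complex.norm_real]
      exact abs_of_nonneg (pow_nonneg (hbr0 z) m)
    have hnormg : ∀ z, ‖gF z‖ = br z ^ n := fun z => by
      simp only [hgF]
      rw [Complex.norm_real]
      exact abs_of_nonneg (pow_nonneg (hbr0 z) n)
    have hnorm1c : ∀ z, ‖1 - cF z‖ = 1 - br z ^ m := fun z => by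
      simp only [hcF]
      rw [show (1 : ℂ) - ((br z ^ m : ℝ) : ℂ) = (((1 - br z ^ m : ℝ)) : ℂ) by push_cast; ring,
        Complex.norm_real]
      exact abs_of_nonneg (by nlinarith [pow_le_one₀ (hbr0 z) (hbr1 z) (n := m)])
    -- pointwise bound
    have hbound : ∀ x, ‖(fq * gF) x‖ ≤ 2 * M * ε := by
      intro x
      obtain ⟨y, hy, hxy⟩ := hfgper.exists_mem_Ico (by positivity) x (θ - π)
      rw [hxy]
      have hy1 : θ - π ≤ y := hy.1
      have hy2 : y < θ + π := by have := hy.2; linarith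
      have hval : (fq * gF) y = (q y * (1 - cF y) - q (-y) * cF (-y)) * gF y := by
        simp only [hfq, hbarQ, Pi.mul_apply, Pi.add_apply, Pi.smul_apply, smul_eq_mul, flipF]
        ring
      rw [hval, norm_mul]
      have hc1 : 0 ≤ 1 - br y ^ m := by
        nlinarith [pow_le_one₀ (hbr0 y) (hbr1 y) (n := m)]
      have hc2 : 0 ≤ br (-y) ^ m := pow_nonneg (hbr0 _) m
      have hfqy : ‖q y * (1 - cF y) - q (-y) * cF (-y)‖
          ≤ M * (1 - br y ^ m) + M * (br (-y) ^ m) := by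
        refine (norm_sub_le _ _).trans ?_
        rw [norm_mul, norm_mul, hnorm1c, hnormc]
        exact add_le_add (mul_le_mul_of_nonneg_right (hMq y) hc1)
          (mul_le_mul_of_nonneg_right (hMq (-y)) hc2)
      rcases le_or_gt |y - θ| κ with hcase | hcase
      · -- near θ
        obtain ⟨hyl, hyr⟩ := abs_le.mp hcase
        -- (i) 1 - br y ^ m ≤ ε
        have hcosy : 1 - (y - θ) ^ 2 / 2 ≤ Real.cos (y - θ) := Real.one_sub_sq_div_two_le_cos
        have hsq : (y - θ) ^ 2 ≤ κ ^ 2 := sq_le_sq' (by linarith) (by linarith)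
        have hbry : 1 - κ ^ 2 / 4 ≤ br y := by simp only [hbr]; linarith
        have hbase0 : (0:ℝ) ≤ 1 - κ ^ 2 / 4 := by nlinarith [hκ0.le, hκ1]
        have hpow1 : (1 - κ ^ 2 / 4) ^ m ≤ br y ^ m := pow_le_pow_left₀ hbase0 hbry m
        have hbern : 1 - (m : ℝ) * (κ ^ 2 / 4) ≤ (1 - κ ^ 2 / 4) ^ m := by
          have h := one_add_mul_le_pow (a := -(κ ^ 2 / 4)) (by nlinarith [hκ0.le, hκ1]) m
          calc 1 - (m : ℝ) * (κ ^ 2 / 4) = 1 + (m : ℝ) * (-(κ ^ 2 / 4)) := by ring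
            _ ≤ (1 + -(κ ^ 2 / 4)) ^ m := h
            _ = (1 - κ ^ 2 / 4) ^ m := by ring_nf
        have hmε : (m : ℝ) * (κ ^ 2 / 4) ≤ ε := by
          have h1 : (m : ℝ) * (κ ^ 2 / 4) ≤ (m : ℝ) * (4 * (ε / m) / 4) := by
            apply mul_le_mul_of_nonneg_left _ hmpos.le
            linarith
          have h2 : (m : ℝ) * (4 * (ε / m) / 4) = ε := by
            field_simp
          linarith
        have hi : 1 - br y ^ m ≤ ε := by linarith
        -- (ii) br (-y) ^ m ≤ ε
        have hbrny : br (-y) ≤ ρ := by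
          have hcn : Real.cos (-y - θ) = Real.cos (y + θ) := by
            rw [show -y - θ = -(y + θ) by ring, Real.cos_neg]
          have hz1 : δ ≤ y + θ := by linarith
          have hz2 : y + θ ≤ 2 * π - δ := by linarith
          have h := QCP.cos_le_of_mem hδ0.le hδπ hz1 hz2
          simp only [hbr, hρdef]
          rw [hcn]
          linarith
        have hii : br (-y) ^ m ≤ ε :=
          le_trans (pow_le_pow_left₀ (hbr0 _) hbrny m) hρm
        have hgy : ‖gF y‖ ≤ 1 := by
          rw [hnormg]; exact pow_le_one₀ (hbr0 y) (hbr1 y)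
        calc ‖q y * (1 - cF y) - q (-y) * cF (-y)‖ * ‖gF y‖
            ≤ (M * ε + M * ε) * 1 := by
              apply mul_le_mul _ hgy (norm_nonneg _) (by positivity)
              refine hfqy.trans (add_le_add ?_ ?_)
              · exact mul_le_mul_of_nonneg_left hi hM0
              · exact mul_le_mul_of_nonneg_left hii hM0
          _ = 2 * M * ε := by ring
      · -- far from θ
        have hyabs : |y - θ| ≤ π := abs_le.mpr ⟨by linarith, by linarith⟩
        have hcosy : Real.cos (y - θ) ≤ Real.cos κ := by
          rw [← Real.cos_abs (y - θ)]
          exact Real.cos_le_cos_of_nonneg_of_le_pi hκ0.le hyabs hcase.le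
        have hgb : br y ≤ ρ' := by simp only [hbr, hρ'def]; linarith
        have hgε : br y ^ n ≤ ε := le_trans (pow_le_pow_left₀ (hbr0 y) hgb n) hn.le
        have hfb : ‖q y * (1 - cF y) - q (-y) * cF (-y)‖ ≤ 2 * M := by
          refine hfqy.trans ?_
          have h1 : br (-y) ^ m ≤ 1 := pow_le_one₀ (hbr0 _) (hbr1 _)
          have e1 : M * (1 - br y ^ m) ≤ M * 1 :=
            mul_le_mul_of_nonneg_left (by linarith [pow_nonneg (hbr0 y) m]) hM0
          have e2 : M * br (-y) ^ m ≤ M * 1 := mul_le_mul_of_nonneg_left h1 hM0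
          linarith
        calc ‖q y * (1 - cF y) - q (-y) * cF (-y)‖ * ‖gF y‖
            ≤ (2 * M) * ε := by
              apply mul_le_mul hfb _ (norm_nonneg _) (by positivity)
              rw [hnormg]; exact hgε
          _ = 2 * M * ε := by ring
    -- character computations
    have hξ₁b : ‖ξ₁ (fq * gF)‖ ≤ 2 * M * ε := hbnd₁ (fq * gF) hfgmem (2 * M * ε) hbound
    have hξ₂b : ‖ξ₂ (fq * gF)‖ ≤ 2 * M * ε := hbnd₂ (fq * gF) hfgmem (2 * M * ε) hbound
    have hf1 : ‖ξ₁ fq‖ ≤ 2 * M * ε := by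
      rw [show ξ₁ fq = ξ₁ (fq * gF) by rw [hmul₁ fq hfqmem gF hgQC, hξ₁g, mul_one]]
      exact hξ₁b
    have hf2 : ‖ξ₂ fq‖ ≤ 2 * M * ε := by
      rw [show ξ₂ fq = ξ₂ (fq * gF) by rw [hmul₂ fq hfqmem gF hgQC, hξ₂g, mul_one]]
      exact hξ₂b
    have hξ₁fq : ξ₁ fq = ξ₁ q - ξ₁ barQ := by
      rw [hfq, hadd₁ q hq _ (QCP.QCset_smul _ hbarQmem), hsmul₁ (-1) barQ hbarQmem]
      ring
    have hξ₂fq : ξ₂ fq = ξ₂ q - ξ₂ barQ := by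
      rw [hfq, hadd₂ q hq _ (QCP.QCset_smul _ hbarQmem), hsmul₂ (-1) barQ hbarQmem]
      ring
    have hsub : ξ₁ q - ξ₂ q = ξ₁ fq - ξ₂ fq := by
      rw [hξ₁fq, hξ₂fq, hagree barQ hbarQeven]
      ring
    rw [hsub]
    calc ‖ξ₁ fq - ξ₂ fq‖ ≤ ‖ξ₁ fq‖ + ‖ξ₂ fq‖ := norm_sub_le _ _
      _ ≤ 2 * M * ε + 2 * M * ε := add_le_add hf1 hf2
      _ ≤ (4 * M + 1) * ε := by nlinarith
  have hzero : ξ₁ q - ξ₂ q = 0 := by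
    have h4 : (0:ℝ) < 4 * M + 1 := by linarith
    have hle : ‖ξ₁ q - ξ₂ q‖ ≤ 0 := by
      refine le_of_forall_pos_le_add (fun ε hε => ?_)
      have hk := key (ε / (4 * M + 1)) (by positivity)
      rw [mul_div_cancel₀ _ (ne_of_gt h4)] at hk
      linarith
    exact norm_le_zero_iff.mp hle
  exact sub_eq_zero.mp hzero
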